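/- Let A be a complex Banach algebra and a, b ∈ A with generalized Hirano inverses such that ab = ba = 0. Then a + b has a generalized Hirano inverse and (a+b)^h = a^h + b^h. -/

import Mathlib

set_option linter.unusedSectionVars false

/-- `a` is quasinilpotent: `1 + a*x` is a unit for every `x` commuting with `a`. -/
def IsQuasinilpotent {R : Type*} [Ring R] (a : R) : Prop :=
  ∀ x : R, x * a = a * x → IsUnit (1 + a * x)

/-- `x` lies in the double commutant of `a`. -/
def InDoubleCommutant {R : Type*} [Ring R] (a x : R) : Prop :=
  ∀ y : R, y * a = a * y → x * y = y * x

/-- `b` is a generalized Hirano inverse of `a`. -/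
def IsGHInverse {R : Type*} [Ring R] (a b : R) : Prop :=
  b * a * b = b ∧ InDoubleCommutant a b ∧ IsQuasinilpotent (a ^ 2 - a * b)

open Filter Topology ENNReal

section Helpers
variable {A : Type*} [NormedRing A] [NormedAlgebra ℂ A] [CompleteSpace A]

/-- Power norms eventually dominated by any geometric sequence. -/
def QN (x : A) : Prop := ∀ ε : ℝ, 0 < ε → ∀ᶠ n : ℕ in atTop, ‖x ^ n‖ ≤ ε ^ n

lemma qn_of_quasinilpotent {x : A} (h : IsQuasinilpotent x) : QN x := by
  have hσ : spectrum ℂ x ⊆ {0} := by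
    intro lam hlam
    by_contra hne
    have hlam0 : lam ≠ 0 := hne
    have hcomm : ((-(lam⁻¹)) • (1 : A)) * x = x * ((-(lam⁻¹)) • (1 : A)) := by
      rw [smul_mul_assoc, mul_smul_comm, one_mul, mul_one]
    have hu := h _ hcomm
    have hx : (1 : A) + x * ((-(lam⁻¹)) • (1 : A)) = 1 - lam⁻¹ • x := by
      rw [mul_smul_comm, mul_one, neg_smul, sub_eq_add_neg]
    rw [hx] at hu
    have hu2 : IsUnit (algebraMap ℂ A lam - x) := by
      have : algebraMap ℂ A lam - x = lam • ((1 : A) - lam⁻¹ • x) := by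
        rw [smul_sub, smul_smul, mul_inv_cancel₀ hlam0, one_smul,
          Algebra.algebraMap_eq_smul_one]
      rw [this, Algebra.smul_def]
      exact ((isUnit_iff_ne_zero.mpr hlam0).map (algebraMap ℂ A)).mul hu
    exact (spectrum.notMem_iff.mpr hu2) hlam
  have hr : spectralRadius ℂ x = 0 := by
    refine le_antisymm ?_ zero_le
    refine iSup₂_le fun k hk => ?_
    have : k = 0 := hσ hk
    simp [this]
  have htend := spectrum.pow_nnnorm_pow_one_div_tendsto_nhds_spectralRadius x
  rw [hr] at htend
  intro ε hε
  have hev : ∀ᶠ n : ℕ in atTop, (‖x ^ n‖₊ : ℝ≥0∞) ^ (1 / n : ℝ) < ENNReal.ofReal ε := by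
    exact htend.eventually_lt_const (by simp [ENNReal.ofReal_pos, hε])
  filter_upwards [hev, eventually_ge_atTop 1] with n hn hn1
  have hn0 : (n : ℝ) ≠ 0 := by positivity
  have h1 : ((‖x ^ n‖₊ : ℝ≥0∞) ^ (1 / n : ℝ)) ^ (n : ℝ) ≤ (ENNReal.ofReal ε) ^ (n : ℝ) := by
    exact ENNReal.rpow_le_rpow hn.le (by positivity)
  rw [← ENNReal.rpow_mul, one_div, inv_mul_cancel₀ hn0, ENNReal.rpow_one,
    ENNReal.rpow_natCast] at h1
  have h2 : (ENNReal.ofReal ε) ^ n = ENNReal.ofReal (ε ^ n) := by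
    rw [ENNReal.ofReal_pow hε.le]
  rw [h2, ← ENNReal.ofReal_coe_nnreal, coe_nnnorm] at h1
  exact (ENNReal.ofReal_le_ofReal_iff (by positivity)).mp h1

omit [NormedAlgebra ℂ A] [CompleteSpace A] in
lemma QN.neg {x : A} (h : QN x) : QN (-x) := by
  intro ε hε
  filter_upwards [h ε hε] with n hn
  rcases Nat.even_or_odd n with he | ho
  · rwa [he.neg_pow]
  · rwa [ho.neg_pow, norm_neg]

lemma QN.mul_right {x c : A} (h : QN x) (hc : Commute x c) : QN (x * c) := by
  intro ε hε
  have hM : (0:ℝ) < ‖c‖ + 1 := by positivity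
  filter_upwards [h (ε / (‖c‖ + 1)) (by positivity), eventually_ge_atTop 1] with n hn hn1
  have hpos : 0 < n := hn1
  calc ‖(x * c) ^ n‖ = ‖x ^ n * c ^ n‖ := by rw [hc.mul_pow]
    _ ≤ ‖x ^ n‖ * ‖c ^ n‖ := norm_mul_le _ _
    _ ≤ (ε / (‖c‖ + 1)) ^ n * (‖c‖ + 1) ^ n := by
        have h1 : ‖c ^ n‖ ≤ (‖c‖ + 1) ^ n :=
          (norm_pow_le' c hpos).trans (pow_le_pow_left₀ (norm_nonneg c) (by linarith) n)
        exact mul_le_mul hn h1 (norm_nonneg _) (by positivity)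
    _ = ε ^ n := by rw [div_pow, div_mul_cancel₀]; positivity

omit [NormedAlgebra ℂ A] [CompleteSpace A] in
lemma QN.add_orth {x y : A} (hx : QN x) (hy : QN y) (h1 : x * y = 0) (h2 : y * x = 0) :
    QN (x + y) := by
  have hxny : ∀ n : ℕ, x ^ (n + 1) * y = 0 := fun n => by
    rw [pow_succ, mul_assoc, h1, mul_zero]
  have hynx : ∀ n : ℕ, y ^ (n + 1) * x = 0 := fun n => by
    rw [pow_succ, mul_assoc, h2, mul_zero]
  have hpow : ∀ n : ℕ, (x + y) ^ (n + 1) = x ^ (n + 1) + y ^ (n + 1) := by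
    intro n
    induction n with
    | zero => simp
    | succ k ih =>
      rw [pow_succ, ih, add_mul, mul_add, mul_add, hxny, hynx, ← pow_succ, ← pow_succ]
      abel
  intro ε hε
  filter_upwards [hx (ε / 2) (by positivity), hy (ε / 2) (by positivity),
    eventually_ge_atTop 1] with n hnx hny hn1
  obtain ⟨m, rfl⟩ : ∃ m, n = m + 1 := ⟨n - 1, by omega⟩
  rw [hpow]
  calc ‖x ^ (m + 1) + y ^ (m + 1)‖ ≤ ‖x ^ (m + 1)‖ + ‖y ^ (m + 1)‖ := norm_add_le _ _
    _ ≤ (ε / 2) ^ (m + 1) + (ε / 2) ^ (m + 1) := add_le_add hnx hny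
    _ ≤ ε ^ (m + 1) := by
        have h3 : (ε / 2) ^ (m + 1) ≤ ε ^ (m + 1) / 2 := by
          rw [div_pow]
          rw [div_le_div_iff₀ (by positivity) (by norm_num)]
          have : (2:ℝ) ≤ 2 ^ (m+1) := by
            calc (2:ℝ) = 2 ^ 1 := by norm_num
            _ ≤ 2 ^ (m+1) := pow_le_pow_right₀ (by norm_num) (by omega)
          nlinarith [pow_nonneg hε.le (m+1)]
        linarith

omit [NormedAlgebra ℂ A] in
lemma QN.isUnit_one_sub {x : A} (h : QN x) : IsUnit (1 - x) := by
  obtain ⟨n, hn, hn1⟩ := ((h (1/2) (by norm_num)).and (eventually_ge_atTop 1)).exists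
  have hlt : ‖x ^ n‖ < 1 := by
    refine hn.trans_lt ?_
    calc ((1:ℝ)/2) ^ n ≤ (1/2) ^ 1 :=
          pow_le_pow_of_le_one (by norm_num) (by norm_num) hn1
      _ < 1 := by norm_num
  let u : Aˣ := Units.oneSub (x ^ n) hlt
  have hu : (u : A) = 1 - x ^ n := Units.val_oneSub _ _
  have hcom : Commute (1 - x) (u : A) := by
    rw [hu]
    have hxx : x * x ^ n = x ^ n * x := ((Commute.refl x).pow_right n).eq
    show (1 - x) * (1 - x ^ n) = (1 - x ^ n) * (1 - x)
    rw [sub_mul, mul_sub, mul_sub, sub_mul, mul_sub]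
    simp only [one_mul, mul_one, hxx, mul_sub]
    abel
  have hS : (1 - x) * (∑ i ∈ Finset.range n, x ^ i) = 1 - x ^ n := by
    have h3 : (1 - x) * (∑ i ∈ Finset.range n, x ^ i) = -((x - 1) * (∑ i ∈ Finset.range n, x ^ i)) := by
      rw [← neg_mul, neg_sub]
    rw [h3, mul_geom_sum, neg_sub]
  have hS' : (∑ i ∈ Finset.range n, x ^ i) * (1 - x) = 1 - x ^ n := by
    have h3 : (∑ i ∈ Finset.range n, x ^ i) * (1 - x) = -((∑ i ∈ Finset.range n, x ^ i) * (x - 1)) := by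
      rw [← mul_neg, neg_sub]
    rw [h3, geom_sum_mul, neg_sub]
  rw [isUnit_iff_exists]
  refine ⟨(∑ i ∈ Finset.range n, x ^ i) * (↑u⁻¹ : A), ?_, ?_⟩
  · rw [← mul_assoc, hS, ← hu, Units.mul_inv]
  · have hcominv : (↑u⁻¹ : A) * (1 - x) = (1 - x) * (↑u⁻¹ : A) :=
      (hcom.units_inv_right).symm.eq
    rw [mul_assoc, hcominv, ← mul_assoc, hS', ← hu, Units.mul_inv]

lemma isQuasinilpotent_of_qn {x : A} (h : QN x) : IsQuasinilpotent x := by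
  intro c hc
  have hq : QN (x * c) := h.mul_right hc.symm
  have : IsUnit (1 - (-(x * c))) := hq.neg.isUnit_one_sub
  rwa [sub_neg_eq_add] at this

omit [NormedAlgebra ℂ A] [CompleteSpace A] in
lemma eq_zero_of_iter_bound (z X V : A) (hX : QN X)
    (key : ∀ n : ℕ, z = X ^ n * z * V ^ n) : z = 0 := by
  set M := ‖V‖ + 1 with hM
  have hM0 : (0:ℝ) < M := by positivity
  obtain ⟨n, hn, hn1⟩ := ((hX ((2*M)⁻¹) (by positivity)).and (eventually_ge_atTop 1)).exists
  have hpos : 0 < n := hn1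
  have h1 : ‖z‖ ≤ ((2*M)⁻¹)^n * ‖z‖ * M^n := by
    calc ‖z‖ = ‖X ^ n * z * V ^ n‖ := by rw [← key n]
      _ ≤ ‖X ^ n * z‖ * ‖V ^ n‖ := norm_mul_le _ _
      _ ≤ ‖X ^ n‖ * ‖z‖ * ‖V ^ n‖ :=
          mul_le_mul_of_nonneg_right (norm_mul_le _ _) (norm_nonneg _)
      _ ≤ ((2*M)⁻¹)^n * ‖z‖ * M^n := by
          have h2 : ‖V ^ n‖ ≤ M ^ n := (norm_pow_le' V hpos).trans
            (pow_le_pow_left₀ (norm_nonneg _) (by rw [hM]; linarith) n)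
          exact mul_le_mul (mul_le_mul hn le_rfl (norm_nonneg _) (by positivity)) h2
            (norm_nonneg _) (by positivity)
  have h3 : ((2*M)⁻¹)^n * M^n = (1/2:ℝ)^n := by
    rw [← mul_pow]; congr 1; field_simp
  have h4 : ((1:ℝ)/2)^n ≤ 1/2 := by
    have := pow_le_pow_of_le_one (by norm_num : (0:ℝ) ≤ 1/2) (by norm_num : (1:ℝ)/2 ≤ 1) hn1
    simpa using this
  have h5 : ‖z‖ ≤ (1/2:ℝ)^n * ‖z‖ := by
    calc ‖z‖ ≤ ((2*M)⁻¹)^n * ‖z‖ * M^n := h1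
      _ = (((2*M)⁻¹)^n * M^n) * ‖z‖ := by ring
      _ = (1/2:ℝ)^n * ‖z‖ := by rw [h3]
  have h6 : ‖z‖ ≤ 0 := by nlinarith [norm_nonneg z]
  exact norm_le_zero_iff.mp h6

omit [NormedAlgebra ℂ A] [CompleteSpace A] in
lemma eq_zero_of_iter_bound' (z X V : A) (hX : QN X)
    (key : ∀ n : ℕ, z = V ^ n * z * X ^ n) : z = 0 := by
  set M := ‖V‖ + 1 with hM
  have hM0 : (0:ℝ) < M := by positivity
  obtain ⟨n, hn, hn1⟩ := ((hX ((2*M)⁻¹) (by positivity)).and (eventually_ge_atTop 1)).exists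
  have hpos : 0 < n := hn1
  have h1 : ‖z‖ ≤ M^n * ‖z‖ * ((2*M)⁻¹)^n := by
    calc ‖z‖ = ‖V ^ n * z * X ^ n‖ := by rw [← key n]
      _ ≤ ‖V ^ n * z‖ * ‖X ^ n‖ := norm_mul_le _ _
      _ ≤ ‖V ^ n‖ * ‖z‖ * ‖X ^ n‖ :=
          mul_le_mul_of_nonneg_right (norm_mul_le _ _) (norm_nonneg _)
      _ ≤ M^n * ‖z‖ * ((2*M)⁻¹)^n := by
          have h2 : ‖V ^ n‖ ≤ M ^ n := (norm_pow_le' V hpos).trans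
            (pow_le_pow_left₀ (norm_nonneg _) (by rw [hM]; linarith) n)
          exact mul_le_mul (mul_le_mul h2 le_rfl (norm_nonneg _) (by positivity)) hn
            (norm_nonneg _) (by positivity)
  have h3 : ((2*M)⁻¹)^n * M^n = (1/2:ℝ)^n := by
    rw [← mul_pow]; congr 1; field_simp
  have h4 : ((1:ℝ)/2)^n ≤ 1/2 := by
    have := pow_le_pow_of_le_one (by norm_num : (0:ℝ) ≤ 1/2) (by norm_num : (1:ℝ)/2 ≤ 1) hn1
    simpa using this
  have h5 : ‖z‖ ≤ (1/2:ℝ)^n * ‖z‖ := by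
    calc ‖z‖ ≤ M^n * ‖z‖ * ((2*M)⁻¹)^n := h1
      _ = (((2*M)⁻¹)^n * M^n) * ‖z‖ := by ring
      _ = (1/2:ℝ)^n * ‖z‖ := by rw [h3]
  have h6 : ‖z‖ ≤ 0 := by nlinarith [norm_nonneg z]
  exact norm_le_zero_iff.mp h6

lemma comm2_aux (s D P t : A)
    (hPP : P * P = P) (hsP : s * P = P * s) (hPD : P * D = D) (hDP : D * P = D)
    (hsD : s * D = P) (hDs : D * s = P) (ht : t = s * s)
    (hA : QN (t - t * P)) (hB : QN ((t - P) * P)) : InDoubleCommutant s D := by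
  have htP : t * P = P * t := by
    rw [ht, mul_assoc, hsP, ← mul_assoc, hsP, mul_assoc]
  have hPtP : P * (t * P) = t * P := by
    rw [← mul_assoc, ← htP, mul_assoc, hPP]
  have hU : IsUnit (1 + (t - P) * P) := by
    have := isQuasinilpotent_of_qn hB 1 (by rw [one_mul, mul_one])
    rwa [mul_one] at this
  obtain ⟨U, hUval⟩ := hU
  have hBexp : (U : A) = 1 + t * P - P := by rw [hUval, sub_mul, hPP]; abel
  intro y hy
  have hyt : y * t = t * y := by rw [ht, ← mul_assoc, hy, mul_assoc, hy, ← mul_assoc]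
  set X : A := t - t * P with hXdef
  set z₁ : A := y * P - P * (y * P) with hz₁def
  set z₂ : A := P * y - P * (y * P) with hz₂def
  have hPz₁ : P * z₁ = 0 := by
    rw [hz₁def, mul_sub, ← mul_assoc P P (y * P), hPP, sub_self]
  have hz₁P : z₁ * P = z₁ := by
    rw [hz₁def, sub_mul, mul_assoc (y) P P, hPP, mul_assoc P (y*P) P,
      mul_assoc y P P, hPP]
  have hXz : X * z₁ = t * z₁ := by
    rw [hXdef, sub_mul, mul_assoc, hPz₁, mul_zero, sub_zero]
  have hyPtP : (y * P) * (t * P) = t * (y * P) := by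
    calc (y * P) * (t * P) = y * (P * (t * P)) := by rw [mul_assoc]
      _ = y * (t * P) := by rw [hPtP]
      _ = (y * t) * P := by rw [← mul_assoc]
      _ = (t * y) * P := by rw [hyt]
      _ = t * (y * P) := by rw [mul_assoc]
  have hPyPtP : (P * (y * P)) * (t * P) = t * (P * (y * P)) := by
    calc (P * (y * P)) * (t * P) = P * ((y * P) * (t * P)) := by rw [mul_assoc]
      _ = P * (t * (y * P)) := by rw [hyPtP]
      _ = (P * t) * (y * P) := by rw [← mul_assoc]
      _ = (t * P) * (y * P) := by rw [← htP]
      _ = t * (P * (y * P)) := by rw [mul_assoc]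
  have hz₁tP : z₁ * (t * P) = t * z₁ := by
    rw [hz₁def, sub_mul, hyPtP, hPyPtP, ← mul_sub]
  have hz₁U : z₁ * (U : A) = X * z₁ := by
    calc z₁ * (U : A) = z₁ * (1 + t * P - P) := by rw [hBexp]
      _ = z₁ * (1 + t * P) - z₁ * P := by rw [mul_sub]
      _ = z₁ + z₁ * (t * P) - z₁ * P := by rw [mul_add, mul_one]
      _ = z₁ + t * z₁ - z₁ := by rw [hz₁tP, hz₁P]
      _ = t * z₁ := by abel
      _ = X * z₁ := hXz.symm
  have key1 : ∀ n : ℕ, z₁ = X ^ n * z₁ * ((↑U⁻¹ : A)) ^ n := by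
    intro n
    induction n with
    | zero => simp
    | succ k ih =>
      have hstep : z₁ = (X * z₁) * (↑U⁻¹ : A) := by
        calc z₁ = (z₁ * (U : A)) * (↑U⁻¹ : A) := by rw [mul_assoc, Units.mul_inv, mul_one]
          _ = (X * z₁) * (↑U⁻¹ : A) := by rw [hz₁U]
      calc z₁ = X ^ k * z₁ * (↑U⁻¹ : A) ^ k := ih
        _ = X ^ k * ((X * z₁) * (↑U⁻¹ : A)) * (↑U⁻¹ : A) ^ k := by rw [← hstep]
        _ = X ^ (k+1) * z₁ * (↑U⁻¹ : A) ^ (k+1) := by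
            rw [pow_succ, pow_succ']
            simp only [mul_assoc]
  have hz₁0 : z₁ = 0 := eq_zero_of_iter_bound z₁ X (↑U⁻¹ : A) hA key1
  -- z₂ part
  have hPz₂ : P * z₂ = z₂ := by
    rw [hz₂def, mul_sub, ← mul_assoc P P y, hPP, ← mul_assoc P P (y * P), hPP]
  have hz₂P : z₂ * P = 0 := by
    rw [hz₂def, sub_mul, mul_assoc P y P, mul_assoc P (y*P) P, mul_assoc y P P, hPP,
      sub_self]
  have hUz₂ : (U : A) * z₂ = z₂ * X := by
    have h1 : (U : A) * z₂ = (t * P) * z₂ := by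
      calc (U : A) * z₂ = (1 + t * P - P) * z₂ := by rw [hBexp]
        _ = (1 + t * P) * z₂ - P * z₂ := by rw [sub_mul]
        _ = z₂ + (t * P) * z₂ - z₂ := by rw [add_mul, one_mul, hPz₂]
        _ = (t * P) * z₂ := by abel
    have h2 : (t * P) * z₂ = t * (P * y) - t * (P * (y * P)) := by
      rw [hz₂def, mul_sub]
      congr 1
      · rw [mul_assoc t P (P * y), ← mul_assoc P P y, hPP]
      · rw [mul_assoc t P (P * (y * P)), ← mul_assoc P P (y * P), hPP]
    have hyPt : (y * P) * t = t * (y * P) := by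
      rw [mul_assoc, ← htP, ← mul_assoc, hyt, mul_assoc]
    have h3 : z₂ * t = t * (P * y) - t * (P * (y * P)) := by
      rw [hz₂def, sub_mul]
      congr 1
      · rw [mul_assoc P y t, hyt, ← mul_assoc, ← htP, mul_assoc]
      · rw [mul_assoc P (y * P) t, hyPt, ← mul_assoc, ← htP, mul_assoc]
    have h4 : z₂ * (t * P) = 0 := by
      rw [hz₂def, sub_mul]
      have e1 : (P * y) * (t * P) = t * (P * (y * P)) := by
        calc (P * y) * (t * P) = P * (y * (t * P)) := by rw [mul_assoc]
          _ = P * ((y * t) * P) := by rw [← mul_assoc y t P]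
          _ = P * ((t * y) * P) := by rw [hyt]
          _ = P * (t * (y * P)) := by rw [mul_assoc t y P]
          _ = (P * t) * (y * P) := by rw [← mul_assoc]
          _ = (t * P) * (y * P) := by rw [← htP]
          _ = t * (P * (y * P)) := by rw [mul_assoc]
      have e2 : (P * (y * P)) * (t * P) = t * (P * (y * P)) := hPyPtP
      rw [e1, e2, sub_self]
    rw [h1, h2, hXdef, mul_sub, h3, h4, sub_zero]
  have key2 : ∀ n : ℕ, z₂ = ((↑U⁻¹ : A)) ^ n * z₂ * X ^ n := by
    intro n
    induction n with
    | zero => simp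
    | succ k ih =>
      have hstep : z₂ = (↑U⁻¹ : A) * (z₂ * X) := by
        calc z₂ = (↑U⁻¹ : A) * ((U : A) * z₂) := by rw [← mul_assoc, Units.inv_mul, one_mul]
          _ = (↑U⁻¹ : A) * (z₂ * X) := by rw [hUz₂]
      calc z₂ = (↑U⁻¹ : A) ^ k * z₂ * X ^ k := ih
        _ = (↑U⁻¹ : A) ^ k * ((↑U⁻¹ : A) * (z₂ * X)) * X ^ k := by rw [← hstep]
        _ = (↑U⁻¹ : A) ^ (k+1) * z₂ * X ^ (k+1) := by
            rw [pow_succ, pow_succ']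
            simp only [mul_assoc]
  have hz₂0 : z₂ = 0 := eq_zero_of_iter_bound' z₂ X (↑U⁻¹ : A) hA key2
  have hyP : y * P = P * y := by
    have e1 : y * P = P * (y * P) := by
      have := sub_eq_zero.mp hz₁0; exact this
    have e2 : P * y = P * (y * P) := by
      have := sub_eq_zero.mp hz₂0; exact this
    rw [e1, ← e2]
  -- now conclude
  set c : A := s * P + (1 - P) with hcdef
  set c' : A := D + (1 - P) with hc'def
  have hcD : c * D = P := by
    rw [hcdef, add_mul, sub_mul, one_mul, mul_assoc s P D, hPD, hsD, sub_self, add_zero]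
  have hcP : c * P = s * P := by
    rw [hcdef, add_mul, sub_mul, one_mul, mul_assoc s P P, hPP, sub_self, add_zero]
  have hcc' : c * c' = 1 := by
    rw [hc'def, mul_add, hcD, mul_sub, mul_one, hcP, hcdef]
    abel
  have hDc : D * c = P := by
    rw [hcdef, mul_add, mul_sub, mul_one, hDP, sub_self, add_zero, ← mul_assoc, hDs, hPP]
  have hPc : P * c = s * P := by
    rw [hcdef, mul_add, mul_sub, mul_one, hPP, sub_self, add_zero, ← mul_assoc, ← hsP,
      mul_assoc, hPP]
  have hc'c : c' * c = 1 := by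
    rw [hc'def, add_mul, hDc, sub_mul, one_mul, hPc, hcdef]
    abel
  have hyc : y * c = c * y := by
    rw [hcdef, mul_add, add_mul, mul_sub, sub_mul, mul_one, one_mul, ← mul_assoc y s P,
      hy, mul_assoc s y P, hyP, ← mul_assoc s P y]
  have hyc' : y * c' = c' * y := by
    calc y * c' = (c' * c) * (y * c') := by rw [hc'c, one_mul]
      _ = c' * (c * (y * c')) := by rw [mul_assoc]
      _ = c' * ((c * y) * c') := by rw [← mul_assoc c y c']
      _ = c' * ((y * c) * c') := by rw [← hyc]
      _ = c' * (y * (c * c')) := by rw [mul_assoc y c c']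
      _ = c' * y := by rw [hcc', mul_one]
  have hc'P : c' * P = D := by
    rw [hc'def, add_mul, sub_mul, one_mul, hDP, hPP, sub_self, add_zero]
  calc D * y = (c' * P) * y := by rw [hc'P]
    _ = c' * (P * y) := by rw [mul_assoc]
    _ = c' * (y * P) := by rw [← hyP]
    _ = (c' * y) * P := by rw [← mul_assoc]
    _ = (y * c') * P := by rw [← hyc']
    _ = y * (c' * P) := by rw [mul_assoc]
    _ = y * D := by rw [hc'P]

end Helpers

theorem stmt18 {A : Type*} [NormedRing A] [NormedAlgebra ℂ A] [CompleteSpace A]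
    (a b a' b' : A) (ha : IsGHInverse a a') (hb : IsGHInverse b b')
    (hab : a * b = 0) (hba : b * a = 0) :
    IsGHInverse (a + b) (a' + b') := by
  obtain ⟨ha1, ha2, ha3⟩ := ha
  obtain ⟨hb1, hb2, hb3⟩ := hb
  have caa' : a' * a = a * a' := ha2 a rfl
  have cbb' : b' * b = b * b' := hb2 b rfl
  have ca'b : a' * b = b * a' := ha2 b (by rw [hba, hab])
  have cb'a : b' * a = a * b' := hb2 a (by rw [hab, hba])
  have ca'b' : a' * b' = b' * a' := ha2 b' cb'a
  have hab' : a * b' = 0 := by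
    calc a * b' = a * (b' * b * b') := by rw [hb1]
      _ = ((a * b') * b) * b' := by rw [← mul_assoc, ← mul_assoc]
      _ = ((b' * a) * b) * b' := by rw [← cb'a]
      _ = (b' * (a * b)) * b' := by rw [mul_assoc b']
      _ = 0 := by rw [hab, mul_zero, zero_mul]
  have hb'a : b' * a = 0 := by rw [cb'a, hab']
  have hba' : b * a' = 0 := by
    calc b * a' = b * (a' * a * a') := by rw [ha1]
      _ = ((b * a') * a) * a' := by rw [← mul_assoc, ← mul_assoc]
      _ = ((a' * b) * a) * a' := by rw [← ca'b]
      _ = (a' * (b * a)) * a' := by rw [mul_assoc a']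
      _ = 0 := by rw [hba, mul_zero, zero_mul]
  have ha'b : a' * b = 0 := by rw [ca'b, hba']
  have ha'b' : a' * b' = 0 := by
    calc a' * b' = (a' * a * a') * b' := by rw [ha1]
      _ = (a' * a) * (a' * b') := by rw [mul_assoc]
      _ = (a' * a) * (b' * a') := by rw [ca'b']
      _ = a' * ((a * b') * a') := by rw [mul_assoc, ← mul_assoc a b']
      _ = 0 := by rw [hab', zero_mul, mul_zero]
  have hb'a' : b' * a' = 0 := by rw [← ca'b', ha'b']
  -- key composite identities
  have hsD : (a + b) * (a' + b') = a * a' + b * b' := by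
    rw [add_mul, mul_add, mul_add, hab', hba', add_zero, zero_add]
  have hDs : (a' + b') * (a + b) = a * a' + b * b' := by
    rw [add_mul, mul_add, mul_add, ha'b, hb'a, add_zero, zero_add, caa', cbb']
  have hPP : (a * a' + b * b') * (a * a' + b * b') = a * a' + b * b' := by
    have h1 : (a * a') * (a * a') = a * a' := by
      rw [mul_assoc, ← mul_assoc a' a a', ha1]
    have h2 : (a * a') * (b * b') = 0 := by
      rw [mul_assoc, ← mul_assoc a' b b', ha'b, zero_mul, mul_zero]
    have h3 : (b * b') * (a * a') = 0 := by
      rw [mul_assoc, ← mul_assoc b' a a', hb'a, zero_mul, mul_zero]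
    have h4 : (b * b') * (b * b') = b * b' := by
      rw [mul_assoc, ← mul_assoc b' b b', hb1]
    rw [add_mul, mul_add, mul_add, h1, h2, h3, h4, add_zero, zero_add]
  have hPD : (a * a' + b * b') * (a' + b') = a' + b' := by
    have h1 : (a * a') * a' = a' := by rw [← caa', ha1]
    have h2 : (a * a') * b' = 0 := by rw [mul_assoc, ha'b', mul_zero]
    have h3 : (b * b') * a' = 0 := by rw [mul_assoc, hb'a', mul_zero]
    have h4 : (b * b') * b' = b' := by rw [← cbb', hb1]
    rw [add_mul, mul_add, mul_add, h1, h2, h3, h4, add_zero, zero_add]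
  have hDP : (a' + b') * (a * a' + b * b') = a' + b' := by
    have h1 : a' * (a * a') = a' := by rw [← mul_assoc, ha1]
    have h2 : a' * (b * b') = 0 := by rw [← mul_assoc, ha'b, zero_mul]
    have h3 : b' * (a * a') = 0 := by rw [← mul_assoc, hb'a, zero_mul]
    have h4 : b' * (b * b') = b' := by rw [← mul_assoc, hb1]
    rw [add_mul, mul_add, mul_add, h1, h2, h3, h4, add_zero, zero_add]
  have hsP : (a + b) * (a * a' + b * b') = (a * a' + b * b') * (a + b) := by
    have h1 : a * (b * b') = 0 := by rw [← mul_assoc, hab, zero_mul]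
    have h2 : b * (a * a') = 0 := by rw [← mul_assoc, hba, zero_mul]
    have h3 : (a * a') * b = 0 := by rw [mul_assoc, ha'b, mul_zero]
    have h4 : (b * b') * a = 0 := by rw [mul_assoc, hb'a, mul_zero]
    have h5 : (a * a') * a = a * (a * a') := by rw [mul_assoc, caa', ← mul_assoc]
    have h6 : (b * b') * b = b * (b * b') := by rw [mul_assoc, cbb', ← mul_assoc]
    rw [add_mul, mul_add, mul_add, h1, h2, add_zero, zero_add,
      add_mul, mul_add, mul_add, h3, h4, add_zero, zero_add, h5, h6]
  have ht2 : (a + b) * (a + b) = a * a + b * b := by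
    rw [add_mul, mul_add, mul_add, hab, hba, add_zero, zero_add]
  have hWeq : (a + b) * (a + b) - (a * a' + b * b')
      = (a ^ 2 - a * a') + (b ^ 2 - b * b') := by
    rw [ht2, pow_two, pow_two]; abel
  -- quasinilpotents
  have qwa : QN (a ^ 2 - a * a') := qn_of_quasinilpotent ha3
  have qwb : QN (b ^ 2 - b * b') := qn_of_quasinilpotent hb3
  have key0 : ∀ u v w z : A, v * w = 0 → (u * v) * (w * z) = 0 := fun u v w z h => by
    rw [mul_assoc, ← mul_assoc v w z, h, zero_mul, mul_zero]
  have orth1 : (a ^ 2 - a * a') * (b ^ 2 - b * b') = 0 := by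
    rw [pow_two, pow_two, sub_mul, mul_sub, mul_sub, key0 a a b b hab,
      key0 a a b b' hab, key0 a a' b b ha'b, key0 a a' b b' ha'b]
    simp
  have orth2 : (b ^ 2 - b * b') * (a ^ 2 - a * a') = 0 := by
    rw [pow_two, pow_two, sub_mul, mul_sub, mul_sub, key0 b b a a hba,
      key0 b b a a' hba, key0 b b' a a hb'a, key0 b b' a a' hb'a]
    simp
  have qW : QN ((a ^ 2 - a * a') + (b ^ 2 - b * b')) := qwa.add_orth qwb orth1 orth2
  have qW' : QN ((a + b) * (a + b) - (a * a' + b * b')) := by rw [hWeq]; exact qW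
  -- commutation of W with P
  have htP : ((a + b) * (a + b)) * (a * a' + b * b')
      = (a * a' + b * b') * ((a + b) * (a + b)) := by
    rw [mul_assoc, hsP, ← mul_assoc, hsP, mul_assoc]
  have hWP : ((a + b) * (a + b) - (a * a' + b * b')) * (a * a' + b * b')
      = (a * a' + b * b') * ((a + b) * (a + b) - (a * a' + b * b')) := by
    rw [sub_mul, mul_sub, htP, hPP]
  have qA : QN ((a + b) * (a + b) - ((a + b) * (a + b)) * (a * a' + b * b')) := by
    have e1 : (a + b) * (a + b) - ((a + b) * (a + b)) * (a * a' + b * b')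
        = ((a + b) * (a + b) - (a * a' + b * b')) * (1 - (a * a' + b * b')) := by
      rw [sub_mul, mul_sub, mul_sub, mul_one, mul_one, hPP]
      abel
    rw [e1]
    refine qW'.mul_right ?_
    have h' : ∀ w p : A, w * p = p * w → w * (1 - p) = (1 - p) * w := by
      intro w p h; rw [mul_sub, sub_mul, mul_one, one_mul, h]
    exact h' _ _ hWP
  have qB : QN (((a + b) * (a + b) - (a * a' + b * b')) * (a * a' + b * b')) :=
    qW'.mul_right (show _ = _ from hWP)
  refine ⟨?_, ?_, ?_⟩
  · -- D s D = D
    rw [hDs, hPD]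
  · -- double commutant
    have := comm2_aux (a + b) (a' + b') (a * a' + b * b') ((a + b) * (a + b))
      hPP hsP hPD hDP hsD hDs rfl qA qB
    exact this
  · -- quasinilpotent part
    have : (a + b) ^ 2 - (a + b) * (a' + b')
        = (a ^ 2 - a * a') + (b ^ 2 - b * b') := by
      rw [pow_two, hsD, ht2, pow_two, pow_two]; abel
    rw [this]
    exact isQuasinilpotent_of_qn qW
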